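/- arXiv:2311.10223 — 8 statements merged into one kernel-verified Lean document; each statement's English description precedes it below -/
import Mathlib

section
/- Let μ ∈ ℝⁿ be a probability vector (nonnegative entries summing to 1), let P and P' be n×n column-stochastic real matrices, and let γ ∈ [0,1). Define the discounted state distributions d = (1 − γ)·(I − γP)^{-1}μ and d' = (1 − γ)·(I − γP')^{-1}μ. Then ∑_i |d_i − d'_i| ≤ (γ/(1 − γ)) · ∑_i |((P − P')d')_i|. -/
lemma stoch_l1 {n : ℕ} (B : Matrix (Fin n) (Fin n) ℝ)
    (hB : ∀ i j, 0 ≤ B i j) (hcol : ∀ j, ∑ i, B i j = 1) (w : Fin n → ℝ) :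
    ∑ i, |B.mulVec w i| ≤ ∑ i, |w i| := by
  calc ∑ i, |B.mulVec w i| ≤ ∑ i, ∑ j, B i j * |w j| := by
        refine Finset.sum_le_sum fun i _ => ?_
        calc |B.mulVec w i| = |∑ j, B i j * w j| := rfl
          _ ≤ ∑ j, |B i j * w j| := Finset.abs_sum_le_sum_abs _ _
          _ = ∑ j, B i j * |w j| := by
              refine Finset.sum_congr rfl fun j _ => ?_
              rw [abs_mul, abs_of_nonneg (hB i j)]
    _ = ∑ j, (∑ i, B i j) * |w j| := by rw [Finset.sum_comm]; simp [Finset.sum_mul]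
    _ = ∑ j, |w j| := by simp [hcol]

lemma resolvent_l1 {n : ℕ} (B : Matrix (Fin n) (Fin n) ℝ)
    (hB : ∀ i j, 0 ≤ B i j) (hcol : ∀ j, ∑ i, B i j = 1)
    (γ : ℝ) (hγ0 : 0 ≤ γ) (w : Fin n → ℝ) :
    (1 - γ) * ∑ i, |w i| ≤ ∑ i, |(1 - γ • B).mulVec w i| := by
  have hmv : ∀ i, (1 - γ • B).mulVec w i = w i - γ * B.mulVec w i := by
    intro i
    rw [Matrix.sub_mulVec, Matrix.one_mulVec, Matrix.smul_mulVec]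
    simp
  have h1 : ∑ i, (|w i| - |γ * B.mulVec w i|) ≤ ∑ i, |(1 - γ • B).mulVec w i| := by
    refine Finset.sum_le_sum fun i _ => ?_
    rw [hmv i]
    exact abs_sub_abs_le_abs_sub _ _
  have h2 : ∑ i, |γ * B.mulVec w i| ≤ γ * ∑ i, |w i| := by
    have := stoch_l1 B hB hcol w
    calc ∑ i, |γ * B.mulVec w i| = γ * ∑ i, |B.mulVec w i| := by
          simp [abs_mul, abs_of_nonneg hγ0, Finset.mul_sum]
      _ ≤ γ * ∑ i, |w i| := by nlinarith
  rw [Finset.sum_sub_distrib] at h1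
  nlinarith

lemma resolvent_det_ne_zero {n : ℕ} (B : Matrix (Fin n) (Fin n) ℝ)
    (hB : ∀ i j, 0 ≤ B i j) (hcol : ∀ j, ∑ i, B i j = 1)
    (γ : ℝ) (hγ0 : 0 ≤ γ) (hγ1 : γ < 1) :
    (1 - γ • B).det ≠ 0 := by
  intro hdet
  obtain ⟨v, hv, hv0⟩ := (Matrix.exists_mulVec_eq_zero_iff).2 hdet
  have h := resolvent_l1 B hB hcol γ hγ0 v
  rw [hv0] at h
  simp only [Pi.zero_apply, abs_zero, Finset.sum_const_zero] at h
  have hpos : 0 < ∑ i, |v i| := by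
    obtain ⟨i, hi⟩ := Function.ne_iff.1 hv
    refine Finset.sum_pos' (fun j _ => abs_nonneg _) ⟨i, Finset.mem_univ i, ?_⟩
    simpa using abs_pos.2 hi
  nlinarith

theorem discounted_distribution_l1_bound
    {n : ℕ} (μ : Fin n → ℝ)
    (hμnonneg : ∀ i, 0 ≤ μ i) (hμsum : ∑ i, μ i = 1)
    (P P' : Matrix (Fin n) (Fin n) ℝ)
    (hPnonneg : ∀ i j, 0 ≤ P i j) (hPcol : ∀ j, ∑ i, P i j = 1)
    (hP'nonneg : ∀ i j, 0 ≤ P' i j) (hP'col : ∀ j, ∑ i, P' i j = 1)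
    (γ : ℝ) (hγ0 : 0 ≤ γ) (hγ1 : γ < 1)
    (d d' : Fin n → ℝ)
    (hd : d = (1 - γ) • (1 - γ • P)⁻¹.mulVec μ)
    (hd' : d' = (1 - γ) • (1 - γ • P')⁻¹.mulVec μ) :
    ∑ i, |d i - d' i| ≤ (γ / (1 - γ)) * ∑ i, |(P - P').mulVec d' i| := by
  set A : Matrix (Fin n) (Fin n) ℝ := 1 - γ • P with hA
  set A' : Matrix (Fin n) (Fin n) ℝ := 1 - γ • P' with hA'
  have hdetA := resolvent_det_ne_zero P hPnonneg hPcol γ hγ0 hγ1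
  have hdetA' := resolvent_det_ne_zero P' hP'nonneg hP'col γ hγ0 hγ1
  have hAd : A.mulVec d = (1 - γ) • μ := by
    rw [hd, Matrix.mulVec_smul, Matrix.mulVec_mulVec, Matrix.mul_nonsing_inv _ (isUnit_iff_ne_zero.2 hdetA),
      Matrix.one_mulVec]
  have hA'd' : A'.mulVec d' = (1 - γ) • μ := by
    rw [hd', Matrix.mulVec_smul, Matrix.mulVec_mulVec, Matrix.mul_nonsing_inv _ (isUnit_iff_ne_zero.2 hdetA'),
      Matrix.one_mulVec]
  have hkey : A.mulVec (d - d') = γ • (P - P').mulVec d' := by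
    have : A = A' - γ • (P - P') := by
      rw [hA, hA']; module
    rw [Matrix.mulVec_sub, hAd, this, Matrix.sub_mulVec, hA'd', Matrix.smul_mulVec]
    abel
  have hbound := resolvent_l1 P hPnonneg hPcol γ hγ0 (d - d')
  rw [hkey] at hbound
  have hsum : ∑ i, |(γ • (P - P').mulVec d') i| = γ * ∑ i, |(P - P').mulVec d' i| := by
    simp [abs_mul, abs_of_nonneg hγ0, Finset.mul_sum]
  rw [hsum] at hbound
  have h1γ : 0 < 1 - γ := by linarith
  rw [div_mul_eq_mul_div, le_div_iff₀ h1γ]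
  simp only [Pi.sub_apply] at hbound ⊢
  nlinarith
end

section
/- Let μ ∈ ℝⁿ be a probability vector, let P and P' be n×n column-stochastic real matrices, let γ ∈ [0,1), and let f ∈ ℝⁿ satisfy |f_i| ≤ B for all i and some B ≥ 0. With d = (1 − γ)·(I − γP)^{-1}μ and d' = (1 − γ)·(I − γP')^{-1}μ, one has |∑_i d_i f_i − ∑_i d'_i f_i| ≤ B · (γ/(1 − γ)) · ∑_i |((P − P')d')_i|. -/
lemma l1_mulVec_le {n : ℕ} (P : Matrix (Fin n) (Fin n) ℝ)
    (hP : ∀ i j, 0 ≤ P i j) (hcol : ∀ j, ∑ i, P i j = 1) (v : Fin n → ℝ) :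
    ∑ i, |P.mulVec v i| ≤ ∑ j, |v j| := by
  have h1 : ∑ i, |P.mulVec v i| ≤ ∑ i, ∑ j, |P i j * v j| := by
    apply Finset.sum_le_sum
    intro i _
    simpa [Matrix.mulVec, dotProduct] using
      Finset.abs_sum_le_sum_abs (fun j => P i j * v j) Finset.univ
  have h2 : ∑ i, ∑ j, |P i j * v j| = ∑ j, |v j| := by
    rw [Finset.sum_comm]
    calc ∑ j, ∑ i, |P i j * v j|
        = ∑ j, (∑ i, P i j) * |v j| := by
          refine Finset.sum_congr rfl fun j _ => ?_
          rw [Finset.sum_mul]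
          exact Finset.sum_congr rfl fun i _ => by
            rw [abs_mul, abs_of_nonneg (hP i j)]
      _ = ∑ j, |v j| := by simp [hcol]
  linarith

lemma det_one_sub_smul_ne_zero {n : ℕ} (P : Matrix (Fin n) (Fin n) ℝ)
    (hP : ∀ i j, 0 ≤ P i j) (hcol : ∀ j, ∑ i, P i j = 1)
    (γ : ℝ) (hγ0 : 0 ≤ γ) (hγ1 : γ < 1) :
    (1 - γ • P).det ≠ 0 := by
  intro hdet
  obtain ⟨v, hv, hAv⟩ := (Matrix.exists_mulVec_eq_zero_iff).mpr hdet
  have hveq : ∀ i, v i = γ * P.mulVec v i := by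
    intro i
    have := congrFun hAv i
    simp [Matrix.sub_mulVec, Matrix.one_mulVec, Matrix.smul_mulVec,
      sub_eq_zero] at this
    simpa using this
  have hsum : ∑ i, |v i| ≤ γ * ∑ i, |v i| := by
    calc ∑ i, |v i| = ∑ i, γ * |P.mulVec v i| := by
          refine Finset.sum_congr rfl fun i _ => ?_
          rw [hveq i, abs_mul, abs_of_nonneg hγ0]
      _ = γ * ∑ i, |P.mulVec v i| := by rw [Finset.mul_sum]
      _ ≤ γ * ∑ i, |v i| := by
          exact mul_le_mul_of_nonneg_left (l1_mulVec_le P hP hcol v) hγ0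
  have hnn : 0 ≤ ∑ i, |v i| := Finset.sum_nonneg fun i _ => abs_nonneg _
  have hzero : ∑ i, |v i| = 0 := by nlinarith
  apply hv
  funext i
  have := (Finset.sum_eq_zero_iff_of_nonneg (fun i _ => abs_nonneg (v i))).mp
    hzero i (Finset.mem_univ i)
  simpa [abs_eq_zero] using this

theorem discounted_distribution_expectation_bound
    {n : ℕ} (μ : Fin n → ℝ)
    (hμnonneg : ∀ i, 0 ≤ μ i) (hμsum : ∑ i, μ i = 1)
    (P P' : Matrix (Fin n) (Fin n) ℝ)
    (hPnonneg : ∀ i j, 0 ≤ P i j) (hPcol : ∀ j, ∑ i, P i j = 1)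
    (hP'nonneg : ∀ i j, 0 ≤ P' i j) (hP'col : ∀ j, ∑ i, P' i j = 1)
    (γ : ℝ) (hγ0 : 0 ≤ γ) (hγ1 : γ < 1)
    (f : Fin n → ℝ) (B : ℝ) (hB : 0 ≤ B) (hf : ∀ i, |f i| ≤ B)
    (d d' : Fin n → ℝ)
    (hd : d = (1 - γ) • (1 - γ • P)⁻¹.mulVec μ)
    (hd' : d' = (1 - γ) • (1 - γ • P')⁻¹.mulVec μ) :
    |∑ i, d i * f i - ∑ i, d' i * f i|
      ≤ B * ((γ / (1 - γ)) * ∑ i, |(P - P').mulVec d' i|) := by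
  have hdetP := det_one_sub_smul_ne_zero P hPnonneg hPcol γ hγ0 hγ1
  have hdetP' := det_one_sub_smul_ne_zero P' hP'nonneg hP'col γ hγ0 hγ1
  have hAd : (1 - γ • P).mulVec d = (1 - γ) • μ := by
    rw [hd, Matrix.mulVec_smul, Matrix.mulVec_mulVec,
      Matrix.mul_nonsing_inv _ (isUnit_iff_ne_zero.mpr hdetP), Matrix.one_mulVec]
  have hAd' : (1 - γ • P').mulVec d' = (1 - γ) • μ := by
    rw [hd', Matrix.mulVec_smul, Matrix.mulVec_mulVec,
      Matrix.mul_nonsing_inv _ (isUnit_iff_ne_zero.mpr hdetP'), Matrix.one_mulVec]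
  set e : Fin n → ℝ := fun i => d i - d' i with he
  have hkey : ∀ i, e i = γ * P.mulVec e i + γ * (P - P').mulVec d' i := by
    intro i
    have h1 := congrFun hAd i
    have h2 := congrFun hAd' i
    simp only [Matrix.sub_mulVec, Matrix.one_mulVec, Matrix.smul_mulVec,
      Pi.sub_apply, Pi.smul_apply, smul_eq_mul] at h1 h2 ⊢
    have hPe : P.mulVec e i = P.mulVec d i - P.mulVec d' i := by
      simp [he, Matrix.mulVec, dotProduct, mul_sub, Finset.sum_sub_distrib]
    have hei : e i = d i - d' i := rfl
    rw [hPe, hei]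
    linarith
  set S : ℝ := ∑ i, |(P - P').mulVec d' i| with hS
  have hSnn : 0 ≤ S := Finset.sum_nonneg fun i _ => abs_nonneg _
  have hsum : ∑ i, |e i| ≤ γ * ∑ i, |e i| + γ * S := by
    calc ∑ i, |e i| ≤ ∑ i, (γ * |P.mulVec e i| + γ * |(P - P').mulVec d' i|) := by
          refine Finset.sum_le_sum fun i _ => ?_
          rw [hkey i]
          calc |γ * P.mulVec e i + γ * (P - P').mulVec d' i|
              ≤ |γ * P.mulVec e i| + |γ * (P - P').mulVec d' i| := abs_add_le _ _
            _ = γ * |P.mulVec e i| + γ * |(P - P').mulVec d' i| := by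
                rw [abs_mul, abs_mul, abs_of_nonneg hγ0]
      _ = γ * ∑ i, |P.mulVec e i| + γ * S := by
          rw [Finset.sum_add_distrib, Finset.mul_sum, Finset.mul_sum]
      _ ≤ γ * ∑ i, |e i| + γ * S := by
          have := mul_le_mul_of_nonneg_left (l1_mulVec_le P hPnonneg hPcol e) hγ0
          linarith
  have hγpos : 0 < 1 - γ := by linarith
  have hebound : ∑ i, |e i| ≤ (γ / (1 - γ)) * S := by
    rw [div_mul_eq_mul_div, le_div_iff₀ hγpos]
    nlinarith
  calc |∑ i, d i * f i - ∑ i, d' i * f i|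
      = |∑ i, e i * f i| := by
        congr 1
        rw [← Finset.sum_sub_distrib]
        exact Finset.sum_congr rfl fun i _ => by rw [he]; ring
    _ ≤ ∑ i, |e i * f i| := Finset.abs_sum_le_sum_abs _ _
    _ ≤ ∑ i, |e i| * B := by
        refine Finset.sum_le_sum fun i _ => ?_
        rw [abs_mul]
        exact mul_le_mul_of_nonneg_left (hf i) (abs_nonneg _)
    _ = (∑ i, |e i|) * B := by rw [Finset.sum_mul]
    _ ≤ ((γ / (1 - γ)) * S) * B := mul_le_mul_of_nonneg_right hebound hB
    _ = B * ((γ / (1 - γ)) * S) := by ring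
end

section
/- Let P and P' be n×n column-stochastic real matrices, let γ ∈ [0,1), and let μ ∈ ℝⁿ be a probability vector. Suppose there exist a k-column environment structure: for each index s ∈ {1,…,n}, an n×k column-stochastic matrix T_s and probability vectors π_s, π'_s ∈ ℝᵏ such that the s-th column of P equals T_s π_s and the s-th column of P' equals T_s π'_s. With d' = (1 − γ)·(I − γP')^{-1}μ and d = (1 − γ)·(I − γP)^{-1}μ, one has ∑_i |d_i − d'_i| ≤ (γ/(1 − γ)) · ∑_s d'_s · (∑_a |(π_s)_a − (π'_s)_a|). -/
open Finset

private lemma l1_contract {n : ℕ} (P : Matrix (Fin n) (Fin n) ℝ)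
    (hP : ∀ i j, 0 ≤ P i j) (hcol : ∀ j, ∑ i, P i j = 1) (x : Fin n → ℝ) :
    ∑ i, |P.mulVec x i| ≤ ∑ j, |x j| := by
  have h1 : ∀ i, |P.mulVec x i| ≤ ∑ j, P i j * |x j| := by
    intro i
    calc |P.mulVec x i| = |∑ j, P i j * x j| := by simp [Matrix.mulVec, dotProduct]
    _ ≤ ∑ j, |P i j * x j| := Finset.abs_sum_le_sum_abs _ _
    _ = ∑ j, P i j * |x j| := by
        refine Finset.sum_congr rfl fun j _ => ?_
        rw [abs_mul, abs_of_nonneg (hP i j)]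
  calc ∑ i, |P.mulVec x i| ≤ ∑ i, ∑ j, P i j * |x j| := Finset.sum_le_sum fun i _ => h1 i
  _ = ∑ j, (∑ i, P i j) * |x j| := by rw [Finset.sum_comm]; simp [Finset.sum_mul]
  _ = ∑ j, |x j| := by simp [hcol]

private lemma det_unit {n : ℕ} (γ : ℝ) (hγ0 : 0 ≤ γ) (hγ1 : γ < 1)
    (P : Matrix (Fin n) (Fin n) ℝ) (hP : ∀ i j, 0 ≤ P i j)
    (hcol : ∀ j, ∑ i, P i j = 1) :
    IsUnit ((1 : Matrix (Fin n) (Fin n) ℝ) - γ • P).det := by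
  rw [isUnit_iff_ne_zero]
  intro hdet
  obtain ⟨v, hv0, hv⟩ := Matrix.exists_mulVec_eq_zero_iff.2 hdet
  have hv' : v = γ • P.mulVec v := by
    have h := hv
    rw [Matrix.sub_mulVec, Matrix.smul_mulVec, Matrix.one_mulVec, sub_eq_zero] at h
    exact h
  have hsum : ∑ i, |v i| ≤ γ * ∑ i, |v i| := by
    calc ∑ i, |v i| = ∑ i, |γ * P.mulVec v i| := by
          refine Finset.sum_congr rfl fun i _ => ?_
          conv_lhs => rw [hv']
          simp
    _ = γ * ∑ i, |P.mulVec v i| := by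
          rw [Finset.mul_sum]
          refine Finset.sum_congr rfl fun i _ => ?_
          rw [abs_mul, abs_of_nonneg hγ0]
    _ ≤ γ * ∑ i, |v i| :=
          mul_le_mul_of_nonneg_left (l1_contract P hP hcol v) hγ0
  have hpos : 0 < ∑ i, |v i| := by
    have : ∃ i, v i ≠ 0 := by
      by_contra h
      push_neg at h
      exact hv0 (funext h)
    obtain ⟨i, hi⟩ := this
    have : 0 < |v i| := abs_pos.2 hi
    have hle : |v i| ≤ ∑ j, |v j| :=
      Finset.single_le_sum (fun j _ => abs_nonneg (v j)) (Finset.mem_univ i)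
    linarith
  nlinarith

private lemma sol_nonneg {n : ℕ} (γ : ℝ) (hγ0 : 0 ≤ γ) (hγ1 : γ < 1)
    (P : Matrix (Fin n) (Fin n) ℝ) (hP : ∀ i j, 0 ≤ P i j) (hcol : ∀ j, ∑ i, P i j = 1)
    (μ : Fin n → ℝ) (hμ : ∀ i, 0 ≤ μ i)
    (x : Fin n → ℝ) (hx : ∀ i, x i = γ * P.mulVec x i + (1 - γ) * μ i) :
    ∀ i, 0 ≤ x i := by
  by_contra h
  push_neg at h
  obtain ⟨i0, hi0⟩ := h
  classical
  set S := Finset.univ.filter (fun i => x i < 0) with hS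
  have hi0S : i0 ∈ S := by simp [hS, hi0]
  have hσneg : ∑ i ∈ S, x i < 0 :=
    Finset.sum_neg (fun i hi => (Finset.mem_filter.1 hi).2) ⟨i0, hi0S⟩
  have key : ∑ j ∈ S, x j ≤ ∑ i ∈ S, P.mulVec x i := by
    have expand : ∑ i ∈ S, P.mulVec x i = ∑ j, x j * (∑ i ∈ S, P i j) := by
      simp only [Matrix.mulVec, dotProduct]
      rw [Finset.sum_comm]
      refine Finset.sum_congr rfl fun j _ => ?_
      rw [Finset.mul_sum]
      refine Finset.sum_congr rfl fun i _ => mul_comm _ _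
    rw [expand]
    have hsplit := Finset.sum_filter_add_sum_filter_not Finset.univ
      (fun j => x j < 0) (fun j => x j * (∑ i ∈ S, P i j))
    have h1 : ∑ j ∈ S, x j ≤ ∑ j ∈ S, x j * (∑ i ∈ S, P i j) := by
      refine Finset.sum_le_sum fun j hj => ?_
      have hxj : x j < 0 := (Finset.mem_filter.1 hj).2
      have hc1 : (∑ i ∈ S, P i j) ≤ 1 := by
        rw [← hcol j]
        exact Finset.sum_le_sum_of_subset_of_nonneg (Finset.subset_univ S)
          (fun i _ _ => hP i j)
      nlinarith
    have h2 : 0 ≤ ∑ j ∈ Finset.univ.filter (fun j => ¬ x j < 0),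
        x j * (∑ i ∈ S, P i j) := by
      refine Finset.sum_nonneg fun j hj => ?_
      have hxj : 0 ≤ x j := le_of_not_gt (Finset.mem_filter.1 hj).2
      exact mul_nonneg hxj (Finset.sum_nonneg fun i _ => hP i j)
    calc ∑ j ∈ S, x j ≤ ∑ j ∈ S, x j * (∑ i ∈ S, P i j) := h1
    _ ≤ ∑ j ∈ S, x j * (∑ i ∈ S, P i j)
        + ∑ j ∈ Finset.univ.filter (fun j => ¬ x j < 0), x j * (∑ i ∈ S, P i j) := by
          linarith
    _ = ∑ j, x j * (∑ i ∈ S, P i j) := hsplit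
  have hμS : 0 ≤ ∑ i ∈ S, μ i := Finset.sum_nonneg fun i _ => hμ i
  have heq : ∑ i ∈ S, x i
      = γ * (∑ i ∈ S, P.mulVec x i) + (1 - γ) * (∑ i ∈ S, μ i) := by
    rw [Finset.mul_sum, Finset.mul_sum, ← Finset.sum_add_distrib]
    exact Finset.sum_congr rfl fun i _ => hx i
  have : ∑ i ∈ S, x i ≥ γ * (∑ i ∈ S, x i) := by
    have h3 : γ * (∑ i ∈ S, x i) ≤ γ * (∑ i ∈ S, P.mulVec x i) :=
      mul_le_mul_of_nonneg_left key hγ0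
    have h4 : 0 ≤ (1 - γ) * (∑ i ∈ S, μ i) := mul_nonneg (by linarith) hμS
    linarith [heq]
  nlinarith

theorem discounted_distribution_policy_bound
    {n k : ℕ} (μ : Fin n → ℝ)
    (hμnonneg : ∀ i, 0 ≤ μ i) (hμsum : ∑ i, μ i = 1)
    (P P' : Matrix (Fin n) (Fin n) ℝ)
    (hPnonneg : ∀ i j, 0 ≤ P i j) (hPcol : ∀ j, ∑ i, P i j = 1)
    (hP'nonneg : ∀ i j, 0 ≤ P' i j) (hP'col : ∀ j, ∑ i, P' i j = 1)
    (T : Fin n → Matrix (Fin n) (Fin k) ℝ)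
    (hTnonneg : ∀ s i a, 0 ≤ T s i a) (hTcol : ∀ s a, ∑ i, T s i a = 1)
    (π π' : Fin n → Fin k → ℝ)
    (hπnonneg : ∀ s a, 0 ≤ π s a) (hπsum : ∀ s, ∑ a, π s a = 1)
    (hπ'nonneg : ∀ s a, 0 ≤ π' s a) (hπ'sum : ∀ s, ∑ a, π' s a = 1)
    (hP : ∀ s i, P i s = ∑ a, T s i a * π s a)
    (hP' : ∀ s i, P' i s = ∑ a, T s i a * π' s a)
    (γ : ℝ) (hγ0 : 0 ≤ γ) (hγ1 : γ < 1)
    (d d' : Fin n → ℝ)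
    (hd : d = (1 - γ) • (1 - γ • P)⁻¹.mulVec μ)
    (hd' : d' = (1 - γ) • (1 - γ • P')⁻¹.mulVec μ) :
    ∑ i, |d i - d' i| ≤ (γ / (1 - γ)) * ∑ s, d' s * ∑ a, |π s a - π' s a| := by
  have hγ1' : (0:ℝ) < 1 - γ := by linarith
  set A : Matrix (Fin n) (Fin n) ℝ := 1 - γ • P with hAdef
  set A' : Matrix (Fin n) (Fin n) ℝ := 1 - γ • P' with hA'def
  have hdetA : IsUnit A.det := det_unit γ hγ0 hγ1 P hPnonneg hPcol
  have hdetA' : IsUnit A'.det := det_unit γ hγ0 hγ1 P' hP'nonneg hP'col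
  have hAd : A.mulVec d = (1 - γ) • μ := by
    rw [hd, Matrix.mulVec_smul, Matrix.mulVec_mulVec, Matrix.mul_nonsing_inv _ hdetA,
      Matrix.one_mulVec]
  have hA'd' : A'.mulVec d' = (1 - γ) • μ := by
    rw [hd', Matrix.mulVec_smul, Matrix.mulVec_mulVec, Matrix.mul_nonsing_inv _ hdetA',
      Matrix.one_mulVec]
  -- entrywise fixed point equation for d'
  have hd'eq : ∀ i, d' i = γ * P'.mulVec d' i + (1 - γ) * μ i := by
    intro i
    have h := congrFun hA'd' i
    rw [hA'def, Matrix.sub_mulVec, Matrix.smul_mulVec, Matrix.one_mulVec] at h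
    have h' : d' i - γ * P'.mulVec d' i = (1 - γ) * μ i := by
      simpa using h
    linarith
  have hd'nonneg : ∀ s, 0 ≤ d' s :=
    sol_nonneg γ hγ0 hγ1 P' hP'nonneg hP'col μ hμnonneg d' hd'eq
  -- error equation
  set e : Fin n → ℝ := d - d' with hedef
  set v : Fin n → ℝ := (P - P').mulVec d' with hvdef
  have hee : ∀ i, e i = γ * P.mulVec e i + γ * v i := by
    intro i
    have h1 := congrFun hAd i
    rw [hAdef, Matrix.sub_mulVec, Matrix.smul_mulVec, Matrix.one_mulVec] at h1
    have h2 := hd'eq i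
    have h3 : v i = P.mulVec d' i - P'.mulVec d' i := by
      rw [hvdef, Matrix.sub_mulVec]; simp
    have h4 : P.mulVec e i = P.mulVec d i - P.mulVec d' i := by
      have : e = d - d' := hedef
      rw [this]
      simp [Matrix.mulVec_sub]
    have h5 : e i = d i - d' i := by rw [hedef]; simp
    have h6 : (d i - γ * P.mulVec d i) = (1 - γ) * μ i := by
      simpa using h1
    rw [h5, h4, h3]
    linarith
  -- sums
  have hE1 : ∑ i, |e i| ≤ γ * (∑ i, |e i|) + γ * (∑ i, |v i|) := by
    calc ∑ i, |e i| = ∑ i, |γ * P.mulVec e i + γ * v i| := by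
          exact Finset.sum_congr rfl fun i _ => by rw [hee i]
    _ ≤ ∑ i, (γ * |P.mulVec e i| + γ * |v i|) := by
          refine Finset.sum_le_sum fun i _ => ?_
          calc |γ * P.mulVec e i + γ * v i| ≤ |γ * P.mulVec e i| + |γ * v i| := abs_add_le _ _
          _ = γ * |P.mulVec e i| + γ * |v i| := by
              rw [abs_mul, abs_mul, abs_of_nonneg hγ0]
    _ = γ * (∑ i, |P.mulVec e i|) + γ * (∑ i, |v i|) := by
          rw [Finset.sum_add_distrib, Finset.mul_sum, Finset.mul_sum]
    _ ≤ γ * (∑ i, |e i|) + γ * (∑ i, |v i|) := by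
          have := l1_contract P hPnonneg hPcol e
          nlinarith [Finset.sum_nonneg fun i (_ : i ∈ Finset.univ) => abs_nonneg (v i)]
  -- column bound
  have hcolbound : ∀ s, ∑ i, |P i s - P' i s| ≤ ∑ a, |π s a - π' s a| := by
    intro s
    have hdiff : ∀ i, P i s - P' i s = ∑ a, T s i a * (π s a - π' s a) := by
      intro i
      rw [hP s i, hP' s i, ← Finset.sum_sub_distrib]
      exact Finset.sum_congr rfl fun a _ => by ring
    calc ∑ i, |P i s - P' i s| ≤ ∑ i, ∑ a, T s i a * |π s a - π' s a| := by
          refine Finset.sum_le_sum fun i _ => ?_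
          rw [hdiff i]
          calc |∑ a, T s i a * (π s a - π' s a)| ≤ ∑ a, |T s i a * (π s a - π' s a)| :=
                Finset.abs_sum_le_sum_abs _ _
          _ = ∑ a, T s i a * |π s a - π' s a| := by
                refine Finset.sum_congr rfl fun a _ => ?_
                rw [abs_mul, abs_of_nonneg (hTnonneg s i a)]
    _ = ∑ a, (∑ i, T s i a) * |π s a - π' s a| := by
          rw [Finset.sum_comm]; simp [Finset.sum_mul]
    _ = ∑ a, |π s a - π' s a| := by simp [hTcol]
  -- bound on v
  have hV : ∑ i, |v i| ≤ ∑ s, d' s * ∑ a, |π s a - π' s a| := by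
    calc ∑ i, |v i| ≤ ∑ i, ∑ s, |P i s - P' i s| * d' s := by
          refine Finset.sum_le_sum fun i _ => ?_
          have : v i = ∑ s, (P i s - P' i s) * d' s := by
            rw [hvdef]; simp [Matrix.mulVec, dotProduct, Matrix.sub_apply]
          rw [this]
          calc |∑ s, (P i s - P' i s) * d' s| ≤ ∑ s, |(P i s - P' i s) * d' s| :=
                Finset.abs_sum_le_sum_abs _ _
          _ = ∑ s, |P i s - P' i s| * d' s := by
                refine Finset.sum_congr rfl fun s _ => ?_
                rw [abs_mul, abs_of_nonneg (hd'nonneg s)]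
    _ = ∑ s, (∑ i, |P i s - P' i s|) * d' s := by
          rw [Finset.sum_comm]; simp [Finset.sum_mul]
    _ ≤ ∑ s, (∑ a, |π s a - π' s a|) * d' s := by
          refine Finset.sum_le_sum fun s _ => ?_
          exact mul_le_mul_of_nonneg_right (hcolbound s) (hd'nonneg s)
    _ = ∑ s, d' s * ∑ a, |π s a - π' s a| := by
          exact Finset.sum_congr rfl fun s _ => mul_comm _ _
  -- combine
  have hgoal1 : ∑ i, |e i| ≤ (γ / (1 - γ)) * ∑ i, |v i| := by
    rw [div_mul_eq_mul_div, le_div_iff₀ hγ1']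
    nlinarith [hE1]
  have hfrac : 0 ≤ γ / (1 - γ) := div_nonneg hγ0 (le_of_lt hγ1')
  have : ∑ i, |d i - d' i| = ∑ i, |e i| := by
    refine Finset.sum_congr rfl fun i _ => ?_
    rw [hedef]; simp
  rw [this]
  calc ∑ i, |e i| ≤ (γ / (1 - γ)) * ∑ i, |v i| := hgoal1
  _ ≤ (γ / (1 - γ)) * ∑ s, d' s * ∑ a, |π s a - π' s a| :=
      mul_le_mul_of_nonneg_left hV hfrac
end

section
/- Let P and Q be n×n row-stochastic real matrices, γ ∈ [0,1), and R ∈ ℝⁿ, and set V_P = (I − γP)^{-1}R and V_Q = (I − γQ)^{-1}R. If |((P − Q)V_Q)_j| ≤ c for all j, then |(V_P)_i − (V_Q)_i| ≤ (γ/(1 − γ))·c for all i. -/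
open Matrix

/-- Sup-norm contraction bound for the resolvent of a row-stochastic matrix. -/
lemma stochastic_resolvent_bound {n : ℕ} (P : Matrix (Fin n) (Fin n) ℝ)
    (hPnonneg : ∀ i j, 0 ≤ P i j) (hProw : ∀ i, ∑ j, P i j = 1)
    (γ : ℝ) (hγ0 : 0 ≤ γ) (hγ1 : γ < 1)
    (v w : Fin n → ℝ) (hvw : ∀ i, v i - γ * P.mulVec v i = w i)
    (c : ℝ) (hc0 : 0 ≤ c) (hw : ∀ i, |w i| ≤ c) :
    ∀ i, |v i| ≤ c / (1 - γ) := by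
  rcases Nat.eq_zero_or_pos n with hn | hn
  · intro i; exact absurd i.2 (by omega)
  have : Nonempty (Fin n) := ⟨⟨0, hn⟩⟩
  obtain ⟨i0, hi0⟩ := Finite.exists_max (fun i => |v i|)
  set M := |v i0| with hM
  have hMnn : 0 ≤ M := abs_nonneg _
  have hPv : ∀ i, |P.mulVec v i| ≤ M := by
    intro i
    calc |P.mulVec v i| = |∑ j, P i j * v j| := by rw [Matrix.mulVec, dotProduct]
      _ ≤ ∑ j, |P i j * v j| := Finset.abs_sum_le_sum_abs _ _
      _ ≤ ∑ j, P i j * M := by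
          apply Finset.sum_le_sum
          intro j _
          rw [abs_mul, abs_of_nonneg (hPnonneg i j)]
          exact mul_le_mul_of_nonneg_left (hi0 j) (hPnonneg i j)
      _ = M := by rw [← Finset.sum_mul, hProw, one_mul]
  have hMbound : M ≤ c + γ * M := by
    have h1 : v i0 = w i0 + γ * P.mulVec v i0 := by
      have := hvw i0; linarith
    calc M = |w i0 + γ * P.mulVec v i0| := by rw [hM, h1]
      _ ≤ |w i0| + |γ * P.mulVec v i0| := abs_add_le _ _
      _ ≤ c + γ * M := by
          gcongr
          · exact hw i0
          · rw [abs_mul, abs_of_nonneg hγ0]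
            exact mul_le_mul_of_nonneg_left (hPv i0) hγ0
  have hMle : M ≤ c / (1 - γ) := by
    rw [le_div_iff₀ (by linarith)]
    nlinarith
  intro i
  exact le_trans (hi0 i) hMle

theorem value_function_discrepancy_bound
    {n : ℕ} (P Q : Matrix (Fin n) (Fin n) ℝ)
    (hPnonneg : ∀ i j, 0 ≤ P i j) (hProw : ∀ i, ∑ j, P i j = 1)
    (hQnonneg : ∀ i j, 0 ≤ Q i j) (hQrow : ∀ i, ∑ j, Q i j = 1)
    (γ : ℝ) (hγ0 : 0 ≤ γ) (hγ1 : γ < 1)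
    (R : Fin n → ℝ) (VP VQ : Fin n → ℝ)
    (hVP : VP = (1 - γ • P)⁻¹.mulVec R)
    (hVQ : VQ = (1 - γ • Q)⁻¹.mulVec R)
    (c : ℝ) (hc : ∀ j, |(P - Q).mulVec VQ j| ≤ c) :
    ∀ i, |VP i - VQ i| ≤ (γ / (1 - γ)) * c := by
  -- invertibility of 1 - γ • S for any row-stochastic S
  have key : ∀ (S : Matrix (Fin n) (Fin n) ℝ),
      (∀ i j, 0 ≤ S i j) → (∀ i, ∑ j, S i j = 1) → IsUnit (1 - γ • S) := by
    intro S hSnn hSrow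
    rw [← Matrix.mulVec_injective_iff_isUnit]
    intro x y hxy
    have h : ∀ i, (x - y) i - γ * S.mulVec (x - y) i = 0 := by
      intro i
      have := congrFun hxy i
      simp only [Matrix.sub_mulVec, Matrix.one_mulVec, Matrix.smul_mulVec,
        Pi.sub_apply, Pi.smul_apply, smul_eq_mul] at this ⊢
      rw [Matrix.mulVec_sub]
      simp only [Pi.sub_apply]
      linarith
    have hb := stochastic_resolvent_bound S hSnn hSrow γ hγ0 hγ1 (x - y) 0 h 0
      le_rfl (fun i => by simp)
    funext i
    have := hb i
    simp only [zero_div, abs_nonpos_iff] at this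
    have : x i - y i = 0 := this
    linarith
  have hPU := key P hPnonneg hProw
  have hQU := key Q hQnonneg hQrow
  have hPdet : IsUnit (1 - γ • P).det := (Matrix.isUnit_iff_isUnit_det _).mp hPU
  have hQdet : IsUnit (1 - γ • Q).det := (Matrix.isUnit_iff_isUnit_det _).mp hQU
  have hRP : (1 - γ • P).mulVec VP = R := by
    rw [hVP, Matrix.mulVec_mulVec, Matrix.mul_nonsing_inv _ hPdet, Matrix.one_mulVec]
  have hRQ : (1 - γ • Q).mulVec VQ = R := by
    rw [hVQ, Matrix.mulVec_mulVec, Matrix.mul_nonsing_inv _ hQdet, Matrix.one_mulVec]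
  -- (1 - γP)(VP - VQ) = γ (P - Q) VQ  componentwise rearranged
  have heq : ∀ i, (VP - VQ) i - γ * P.mulVec (VP - VQ) i = γ * (P - Q).mulVec VQ i := by
    intro i
    have h1 := congrFun hRP i
    have h2 := congrFun hRQ i
    simp only [Matrix.sub_mulVec, Matrix.one_mulVec, Matrix.smul_mulVec,
      Pi.sub_apply, Pi.smul_apply, smul_eq_mul] at h1 h2 ⊢
    rw [Matrix.mulVec_sub]
    simp only [Pi.sub_apply]
    linarith
  rcases Nat.eq_zero_or_pos n with hn | hn
  · intro i; exact absurd i.2 (by omega)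
  have hc0 : 0 ≤ c := le_trans (abs_nonneg _) (hc ⟨0, hn⟩)
  have hb := stochastic_resolvent_bound P hPnonneg hProw γ hγ0 hγ1 (VP - VQ)
    (fun i => γ * (P - Q).mulVec VQ i) heq (γ * c) (mul_nonneg hγ0 hc0)
    (fun i => by
      rw [abs_mul, abs_of_nonneg hγ0]
      exact mul_le_mul_of_nonneg_left (hc i) hγ0)
  intro i
  have := hb i
  simpa [Pi.sub_apply, mul_div_assoc, div_mul_eq_mul_div, mul_comm c γ] using this
end

section
/- Let S be a type, f, g : S → S two maps, γ ∈ [0,1), and R : S → ℝ with |R(s)| ≤ C for all s and some C ≥ 0. For a map h : S → S define V_h(s) = ∑_{t=0}^∞ γ^t R(h^{∘t}(s)). Then for every s ∈ S, V_f(s) − V_g(s) = γ · ∑_{t=0}^∞ γ^t ( V_g(f(f^{∘t}(s))) − V_g(g(f^{∘t}(s))) ), the series on the right converging absolutely. -/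
theorem deterministic_value_function_telescoping
    {S : Type*} (f g : S → S) (γ : ℝ) (hγ0 : 0 ≤ γ) (hγ1 : γ < 1)
    (R : S → ℝ) (C : ℝ) (hC : 0 ≤ C) (hR : ∀ s, |R s| ≤ C)
    (V : (S → S) → S → ℝ)
    (hV : ∀ (h : S → S) (s : S), V h s = ∑' t : ℕ, γ ^ t * R (h^[t] s)) :
    ∀ s : S,
      Summable (fun t : ℕ =>
        |γ ^ t * (V g (f (f^[t] s)) - V g (g (f^[t] s)))|) ∧
      V f s - V g s
        = γ * ∑' t : ℕ, γ ^ t * (V g (f (f^[t] s)) - V g (g (f^[t] s))) := by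
  have hγ1' : (0:ℝ) < 1 - γ := by linarith
  have hgeo : Summable (fun t : ℕ => γ ^ t) := summable_geometric_of_lt_one hγ0 hγ1
  -- summability of the reward series
  have hsumRabs : ∀ (h : S → S) (s : S),
      Summable (fun t : ℕ => |γ ^ t * R (h^[t] s)|) := by
    intro h s
    apply Summable.of_nonneg_of_le (fun t => abs_nonneg _) (fun t => ?_) (hgeo.mul_right C)
    rw [abs_mul, abs_pow, abs_of_nonneg hγ0]
    exact mul_le_mul_of_nonneg_left (hR _) (pow_nonneg hγ0 t)
  have hsumR : ∀ (h : S → S) (s : S), Summable (fun t : ℕ => γ ^ t * R (h^[t] s)) :=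
    fun h s => (hsumRabs h s).of_abs
  -- bound on V
  have hVbound : ∀ (h : S → S) (s : S), |V h s| ≤ C / (1 - γ) := by
    intro h s
    rw [hV]
    calc |∑' t : ℕ, γ ^ t * R (h^[t] s)| ≤ ∑' t : ℕ, |γ ^ t * R (h^[t] s)| := by
          have := norm_tsum_le_tsum_norm (E := ℝ)
            (f := fun t : ℕ => γ ^ t * R (h^[t] s))
            (by simpa [Real.norm_eq_abs, abs_mul, abs_pow] using hsumRabs h s)
          simpa [Real.norm_eq_abs, abs_mul, abs_pow] using this
      _ ≤ ∑' t : ℕ, γ ^ t * C := by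
          apply Summable.tsum_le_tsum _ (hsumRabs h s) (hgeo.mul_right C)
          intro t
          rw [abs_mul, abs_pow, abs_of_nonneg hγ0]
          exact mul_le_mul_of_nonneg_left (hR _) (pow_nonneg hγ0 t)
      _ = C / (1 - γ) := by
          rw [tsum_mul_right, tsum_geometric_of_lt_one hγ0 hγ1]
          rw [div_eq_mul_inv, mul_comm]
  -- Bellman equation
  have bell : ∀ (h : S → S) (s : S), V h s = R s + γ * V h (h s) := by
    intro h s
    rw [hV h s, hV h (h s), Summable.tsum_eq_zero_add (hsumR h s)]
    have he : (fun t : ℕ => γ ^ (t + 1) * R (h^[t + 1] s))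
        = fun t : ℕ => γ * (γ ^ t * R (h^[t] (h s))) := by
      funext t
      rw [Function.iterate_succ_apply, pow_succ]
      ring
    rw [he, tsum_mul_left]
    simp
  intro s
  set u : ℕ → ℝ := fun t => γ ^ t * V g (f^[t] s) with hu
  have hsumu : Summable u := by
    apply Summable.of_abs
    apply Summable.of_nonneg_of_le (fun t => abs_nonneg _) (fun t => ?_)
      (hgeo.mul_right (C / (1 - γ)))
    rw [hu, abs_mul, abs_pow, abs_of_nonneg hγ0]
    exact mul_le_mul_of_nonneg_left (hVbound _ _) (pow_nonneg hγ0 t)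
  have hsumu' : Summable (fun t => u (t + 1)) := (summable_nat_add_iff 1).2 hsumu
  set b : ℕ → ℝ := fun t => γ ^ t * (V g (f (f^[t] s)) - V g (g (f^[t] s))) with hb
  -- summability of |b|
  have hsumbabs : Summable (fun t : ℕ => |b t|) := by
    apply Summable.of_nonneg_of_le (fun t => abs_nonneg _) (fun t => ?_)
      (hgeo.mul_right (C / (1 - γ) + C / (1 - γ)))
    rw [hb, abs_mul, abs_pow, abs_of_nonneg hγ0]
    apply mul_le_mul_of_nonneg_left _ (pow_nonneg hγ0 t)
    calc |V g (f (f^[t] s)) - V g (g (f^[t] s))|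
        ≤ |V g (f (f^[t] s))| + |V g (g (f^[t] s))| := abs_sub _ _
      _ ≤ C / (1 - γ) + C / (1 - γ) := add_le_add (hVbound _ _) (hVbound _ _)
  have hsumb : Summable b := hsumbabs.of_abs
  refine ⟨hsumbabs, ?_⟩
  -- key pointwise identity
  have hkey : ∀ t : ℕ, γ * b t = u (t + 1) - u t + γ ^ t * R (f^[t] s) := by
    intro t
    have hx := bell g (f^[t] s)
    rw [hb, hu]
    simp only [Function.iterate_succ_apply']
    have : γ * V g (g (f^[t] s)) = V g (f^[t] s) - R (f^[t] s) := by linarith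
    rw [pow_succ]
    linear_combination (γ ^ t : ℝ) * hx
  have hγb : (fun t => γ * b t) = fun t => u (t + 1) - u t + γ ^ t * R (f^[t] s) :=
    funext hkey
  have h1 : ∑' t : ℕ, γ * b t = V f s - V g s := by
    rw [hγb, Summable.tsum_add ((hsumu'.sub hsumu)) (hsumR f s),
      Summable.tsum_sub hsumu' hsumu, Summable.tsum_eq_zero_add hsumu, ← hV f s]
    have hu0 : u 0 = V g s := by simp [hu]
    rw [hu0]
    ring
  rw [← h1, tsum_mul_left]
end

section
/- Let Θ and 𝕄 be types, V : Θ × 𝕄 → ℝ a surrogate value, V* : Θ → ℝ a true value, D : Θ × 𝕄 → ℝ a penalty, and Feas ⊆ Θ a feasible set. Assume: (i) |V(θ, M) − V*(θ)| ≤ D(θ, M) for all θ ∈ Feas and M ∈ 𝕄; (ii) there exists M* ∈ 𝕄 with D(θ, M*) = 0 for all θ ∈ Feas; (iii) θ_old ∈ Feas; (iv) (θ_new, M_new) ∈ Feas × 𝕄 maximizes the objective V(θ, M) − D(θ, M) over Feas × 𝕄. Then V*(θ_new) ≥ V*(θ_old). -/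
theorem monotone_improvement
    {Θ 𝕄 : Type*} (V : Θ → 𝕄 → ℝ) (Vstar : Θ → ℝ) (D : Θ → 𝕄 → ℝ)
    (Feas : Set Θ)
    (hgap : ∀ θ ∈ Feas, ∀ M : 𝕄, |V θ M - Vstar θ| ≤ D θ M)
    (htrue : ∃ Mstar : 𝕄, ∀ θ ∈ Feas, D θ Mstar = 0)
    (θold θnew : Θ) (Mnew : 𝕄)
    (hθold : θold ∈ Feas) (hθnew : θnew ∈ Feas)
    (hmax : ∀ θ ∈ Feas, ∀ M : 𝕄, V θ M - D θ M ≤ V θnew Mnew - D θnew Mnew) :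
    Vstar θold ≤ Vstar θnew := by
  obtain ⟨Ms, hMs⟩ := htrue
  have h1 := hgap θold hθold Ms
  have h2 := hgap θnew hθnew Mnew
  have h3 := hmax θold hθold Ms
  have e1 := hMs θold hθold
  rw [abs_le] at h1 h2
  linarith [h1.1, h1.2, h2.1, h2.2]
end

section
/- Let n ≥ 1 and Φ : {1,…,n} → ℝ with Φ_i ≥ 0 for all i and ∑_i Φ_i² > 0. Let η : ℝ → ℝ be differentiable at 1 with η(1) = 0. Define C(λ) = √(2(1/λ − 1)² + 1) and F(λ) = C(λ)·√((1/n)·∑_i max(Φ_i − η(λ), 0)²) + η(λ). Then F is differentiable at 1 and F'(1) = η'(1)·(1 − ((1/n)∑_i Φ_i) / √((1/n)∑_i Φ_i²)). -/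
lemma sq_posPart_hasDerivAt (a : ℝ) :
    HasDerivAt (fun x : ℝ => max x 0 ^ 2) (2 * max a 0) a := by
  rcases lt_trichotomy a 0 with h | h | h
  · have : max a 0 = 0 := max_eq_right h.le
    rw [this, mul_zero]
    apply (hasDerivAt_const a (0:ℝ)).congr_of_eventuallyEq
    filter_upwards [Iio_mem_nhds h] with x hx
    rw [max_eq_right (le_of_lt hx)]; norm_num
  · subst h
    rw [hasDerivAt_iff_isLittleO]
    simp only [max_self, mul_zero, smul_zero, sub_zero]
    rw [Asymptotics.isLittleO_iff]
    intro ε hε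
    filter_upwards [Metric.ball_mem_nhds (0:ℝ) hε] with x hx
    rw [Metric.mem_ball, Real.dist_eq, sub_zero] at hx
    have h1 : max x 0 ≤ |x| := by
      rcases le_or_gt x 0 with hx0 | hx0
      · rw [max_eq_right hx0]; exact abs_nonneg x
      · rw [max_eq_left hx0.le]; exact le_abs_self x
    have h2 : (0:ℝ) ≤ max x 0 := le_max_right _ _
    have : max x 0 ^ 2 ≤ ε * |x| := by nlinarith [abs_nonneg x]
    simpa [Real.norm_eq_abs, abs_of_nonneg (pow_nonneg h2 2)] using this
  · have : max a 0 = a := max_eq_left h.le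
    rw [this]
    have hp : HasDerivAt (fun x : ℝ => x ^ 2) (2 * a) a := by
      simpa using hasDerivAt_pow 2 a
    apply hp.congr_of_eventuallyEq
    filter_upwards [Ioi_mem_nhds h] with x hx
    rw [max_eq_left (le_of_lt hx)]

theorem dro_dual_deriv_at_full_participation
    (n : ℕ) (hn : 1 ≤ n) (Φ : Fin n → ℝ)
    (hΦnonneg : ∀ i, 0 ≤ Φ i) (hΦpos : 0 < ∑ i, Φ i ^ 2)
    (η : ℝ → ℝ) (hη : DifferentiableAt ℝ η 1) (hη1 : η 1 = 0)
    (Cfun F : ℝ → ℝ)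
    (hC : ∀ lam, Cfun lam = Real.sqrt (2 * (1 / lam - 1) ^ 2 + 1))
    (hF : ∀ lam, F lam
      = Cfun lam * Real.sqrt ((1 / (n : ℝ)) * ∑ i, max (Φ i - η lam) 0 ^ 2)
        + η lam) :
    DifferentiableAt ℝ F 1 ∧
    deriv F 1 = deriv η 1 *
      (1 - ((1 / (n : ℝ)) * ∑ i, Φ i)
        / Real.sqrt ((1 / (n : ℝ)) * ∑ i, Φ i ^ 2)) := by
  have hnpos : (0:ℝ) < (n:ℝ) := by exact_mod_cast hn
  set m2 : ℝ := (1 / (n : ℝ)) * ∑ i, Φ i ^ 2 with hm2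
  have hm2pos : 0 < m2 := by positivity
  have hηd : HasDerivAt η (deriv η 1) 1 := hη.hasDerivAt
  -- inner sum function g
  have hg : HasDerivAt (fun t : ℝ => (1 / (n : ℝ)) * ∑ i, max (Φ i - t) 0 ^ 2)
      ((1 / (n : ℝ)) * ∑ i, -(2 * Φ i)) (η 1) := by
    rw [hη1]
    apply HasDerivAt.const_mul
    apply HasDerivAt.fun_sum
    intro i _
    have hinner : HasDerivAt (fun t : ℝ => Φ i - t) (-1) 0 :=
      (hasDerivAt_id 0).const_sub (Φ i) |>.congr_deriv (by ring) |>.congr_deriv rfl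
    have houter : HasDerivAt (fun x : ℝ => max x 0 ^ 2) (2 * max (Φ i - 0) 0) (Φ i - 0) :=
      sq_posPart_hasDerivAt _
    have := houter.comp 0 hinner
    simpa [max_eq_left (hΦnonneg i), Function.comp_def] using this
  have hcomp : HasDerivAt
      (fun lam : ℝ => (1 / (n : ℝ)) * ∑ i, max (Φ i - η lam) 0 ^ 2)
      (((1 / (n : ℝ)) * ∑ i, -(2 * Φ i)) * deriv η 1) 1 := hg.comp 1 hηd
  have hval : (1 / (n : ℝ)) * ∑ i, max (Φ i - η 1) 0 ^ 2 = m2 := by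
    rw [hη1, hm2]
    congr 1
    refine Finset.sum_congr rfl fun i _ => ?_
    rw [sub_zero, max_eq_left (hΦnonneg i)]
  have hsqrt : HasDerivAt Real.sqrt (1 / (2 * Real.sqrt m2)) m2 :=
    Real.hasDerivAt_sqrt hm2pos.ne'
  have hG : HasDerivAt
      (fun lam : ℝ => Real.sqrt ((1 / (n : ℝ)) * ∑ i, max (Φ i - η lam) 0 ^ 2))
      ((((1 / (n : ℝ)) * ∑ i, -(2 * Φ i)) * deriv η 1) / (2 * Real.sqrt m2)) 1 := by
    have h' := hcomp.sqrt (by rw [hval]; exact hm2pos.ne')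
    rw [hval] at h'
    exact h'
  -- Cfun
  have hCd : HasDerivAt Cfun 0 1 := by
    have hCe : Cfun = fun lam => Real.sqrt (2 * (1 / lam - 1) ^ 2 + 1) := funext hC
    rw [hCe]
    have h0 : HasDerivAt (fun lam : ℝ => lam⁻¹) (-(((1:ℝ)) ^ 2)⁻¹) 1 :=
      hasDerivAt_inv one_ne_zero
    have hinv : HasDerivAt (fun lam : ℝ => 1 / lam - 1) (-1) 1 := by
      simpa [one_div] using h0.sub_const 1
    have hu : HasDerivAt (fun lam : ℝ => 2 * (1 / lam - 1) ^ 2 + 1) 0 1 := by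
      have := ((hinv.fun_pow 2).const_mul 2).add_const 1
      exact this.congr_deriv (by norm_num)
    have := hu.sqrt (by norm_num)
    simpa using this
  have hC1 : Cfun 1 = 1 := by rw [hC]; norm_num
  -- F
  have hFe : F = fun lam => Cfun lam *
      Real.sqrt ((1 / (n : ℝ)) * ∑ i, max (Φ i - η lam) 0 ^ 2) + η lam := funext hF
  have hFd : HasDerivAt F
      (0 * Real.sqrt ((1 / (n : ℝ)) * ∑ i, max (Φ i - η 1) 0 ^ 2)
        + Cfun 1 * ((((1 / (n : ℝ)) * ∑ i, -(2 * Φ i)) * deriv η 1) / (2 * Real.sqrt m2))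
        + deriv η 1) 1 := by
    rw [hFe]
    exact (hCd.mul hG).add hηd
  refine ⟨hFd.differentiableAt, ?_⟩
  rw [hFd.deriv, hC1]
  have hsum : ∑ i, -(2 * Φ i) = -2 * ∑ i, Φ i := by
    rw [Finset.mul_sum]
    exact Finset.sum_congr rfl fun i _ => by ring
  have hs2 : 0 < Real.sqrt m2 := Real.sqrt_pos.mpr hm2pos
  rw [hsum]
  field_simp
  ring
end

section
/- Let κ : ℝ → ℝ be differentiable at 1, and let β, σ : ℝ → ℝ be differentiable at κ(1) with β(κ(1)) = 1 and σ(κ(1)) = 1. Define G(λ) = β(κ(λ))·(1 − λ) + σ(κ(λ))·λ. If |σ'(κ(1))·κ'(1)| < 1, then λ = 1 is a locally asymptotically stable fixed point of the difference equation λ_{t+1} = G(λ_t): G(1) = 1 and there exists ε > 0 such that for every λ with |λ − 1| < ε, the iterates G^{∘t}(λ) converge to 1 as t → ∞. -/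
theorem fair_equilibrium_stability
    (κ β σ : ℝ → ℝ)
    (hκ : DifferentiableAt ℝ κ 1)
    (hβ : DifferentiableAt ℝ β (κ 1)) (hσ : DifferentiableAt ℝ σ (κ 1))
    (hβ1 : β (κ 1) = 1) (hσ1 : σ (κ 1) = 1)
    (G : ℝ → ℝ) (hG : ∀ lam, G lam = β (κ lam) * (1 - lam) + σ (κ lam) * lam)
    (hstab : |deriv σ (κ 1) * deriv κ 1| < 1) :
    G 1 = 1 ∧
    ∃ ε > 0, ∀ lam : ℝ, |lam - 1| < ε →
      Filter.Tendsto (fun t : ℕ => G^[t] lam) Filter.atTop (nhds 1) := by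
  have hκd := hκ.hasDerivAt
  have hβc : HasDerivAt (fun x => β (κ x)) (deriv β (κ 1) * deriv κ 1) 1 :=
    hβ.hasDerivAt.comp 1 hκd
  have hσc : HasDerivAt (fun x => σ (κ x)) (deriv σ (κ 1) * deriv κ 1) 1 :=
    hσ.hasDerivAt.comp 1 hκd
  have hGeq : G = fun x => β (κ x) * (1 - x) + σ (κ x) * x := funext hG
  have hG1 : G 1 = 1 := by rw [hG]; simp [hβ1, hσ1]
  set d := deriv σ (κ 1) * deriv κ 1 with hd
  have hder : HasDerivAt G d 1 := by
    rw [hGeq]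
    have h1 : HasDerivAt (fun x : ℝ => 1 - x) (-1) 1 := by
      simpa using (hasDerivAt_id (1 : ℝ)).const_sub 1
    have h2 := (hβc.mul h1).add (hσc.mul (hasDerivAt_id 1))
    refine h2.congr_deriv ?_
    simp only [hβ1, hσ1, id]; ring
  refine ⟨hG1, ?_⟩
  set c := (|d| + 1) / 2 with hc
  have hc1 : c < 1 := by rw [hc]; linarith
  have hdc : |d| < c := by rw [hc]; linarith
  have hc0 : 0 ≤ c := le_trans (abs_nonneg d) hdc.le
  have hslope := hasDerivAt_iff_tendsto_slope.mp hder
  have hmem : {y : ℝ | |y| < c} ∈ nhds d :=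
    (isOpen_lt continuous_abs continuous_const).mem_nhds hdc
  have hev : {x : ℝ | |slope G 1 x| < c} ∈ nhdsWithin 1 {(1 : ℝ)}ᶜ := hslope hmem
  rw [Metric.mem_nhdsWithin_iff] at hev
  obtain ⟨ε, hε, hball⟩ := hev
  have key : ∀ x : ℝ, |x - 1| < ε → |G x - 1| ≤ c * |x - 1| := by
    intro x hx
    by_cases hx1 : x = 1
    · simp [hx1, hG1]
    · have hxmem : x ∈ Metric.ball (1 : ℝ) ε ∩ {(1 : ℝ)}ᶜ := by
        constructor
        · rwa [Metric.mem_ball, Real.dist_eq]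
        · simpa using hx1
      have hs : |slope G 1 x| < c := hball hxmem
      have hsub : x - 1 ≠ 0 := sub_ne_zero.mpr hx1
      have : slope G 1 x = (G x - 1) / (x - 1) := by
        rw [slope_def_field, hG1]
      rw [this, abs_div] at hs
      have h1 : |G x - 1| < c * |x - 1| := by
        have habs : 0 < |x - 1| := abs_pos.mpr hsub
        calc |G x - 1| = |G x - 1| / |x - 1| * |x - 1| := by field_simp
          _ < c * |x - 1| := by exact mul_lt_mul_of_pos_right hs habs
      exact h1.le
  refine ⟨ε, hε, fun lam hlam => ?_⟩
  have iter : ∀ n : ℕ, |G^[n] lam - 1| ≤ c ^ n * |lam - 1| := by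
    intro n
    induction n with
    | zero => simp
    | succ n ih =>
      have hlt : |G^[n] lam - 1| < ε := by
        have hcn : c ^ n ≤ 1 := pow_le_one₀ hc0 hc1.le
        calc |G^[n] lam - 1| ≤ c ^ n * |lam - 1| := ih
          _ ≤ 1 * |lam - 1| := by
            exact mul_le_mul_of_nonneg_right hcn (abs_nonneg _)
          _ = |lam - 1| := one_mul _
          _ < ε := hlam
      rw [Function.iterate_succ_apply']
      calc |G (G^[n] lam) - 1| ≤ c * |G^[n] lam - 1| := key _ hlt
        _ ≤ c * (c ^ n * |lam - 1|) := by
            exact mul_le_mul_of_nonneg_left ih hc0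
        _ = c ^ (n + 1) * |lam - 1| := by ring
  rw [tendsto_iff_dist_tendsto_zero]
  simp only [Real.dist_eq]
  have hlim : Filter.Tendsto (fun n : ℕ => c ^ n * |lam - 1|) Filter.atTop (nhds 0) := by
    have := tendsto_pow_atTop_nhds_zero_of_lt_one hc0 hc1
    simpa using this.mul_const |lam - 1|
  exact squeeze_zero (fun n => abs_nonneg _) iter hlim
end
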